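/- Let 𝔽 be ℝ or ℂ, X a Banach space over 𝔽 with dim X ≥ 2, and 𝒜 a standard operator algebra in B(X). If Φ : 𝒜 → 𝒜 is a surjective strong 3-commutativity preserving map, then Φ maps the set of scalar multiples of I onto the set of scalar multiples of I, i.e. Φ(𝔽I) = 𝔽I. -/

import Mathlib

set_option synthInstance.maxHeartbeats 400000
set_option maxHeartbeats 1000000

/-- The commutator `[A,B] = AB - BA` in a ring. -/
def bracket1 {R : Type*} [Ring R] (A B : R) : R := A * B - B * A

/-- The 3-commutator `[A,B]₃ = [[[A,B],B],B]` in a ring. -/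
def bracket3 {R : Type*} [Ring R] (A B : R) : R := bracket1 (bracket1 (bracket1 A B) B) B

/-- A standard operator algebra on a normed space `X` over `𝕜` is a subalgebra of
`B(X)` (automatically containing the identity) containing all finite-rank operators. -/
def IsStandardOperatorAlgebra (𝕜 : Type*) [RCLike 𝕜] (X : Type*)
    [NormedAddCommGroup X] [NormedSpace 𝕜 X]
    (𝒜 : Subalgebra 𝕜 (X →L[𝕜] X)) : Prop :=
  ∀ T : X →L[𝕜] X, FiniteDimensional 𝕜 (LinearMap.range (T : X →ₗ[𝕜] X)) → T ∈ 𝒜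

lemma b3_idem {R : Type*} [Ring R] (A P : R) (h : P * P = P) :
    bracket3 A P = A * P - P * A := by
  have h2 : ∀ C : R, P * (P * C) = P * C := fun C => by rw [← mul_assoc, h]
  have e2 : bracket1 (A * P - P * A) P = A * P - 2 * (P * A * P) + P * A := by
    simp only [bracket1]; noncomm_ring; simp [mul_assoc, h, h2]; abel
  have e3 : bracket1 (A * P - 2 * (P * A * P) + P * A) P = A * P - P * A := by
    simp only [bracket1]; noncomm_ring; simp [mul_assoc, h, h2]
  rw [bracket3, show bracket1 A P = A * P - P * A from rfl, e2, e3]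

lemma b3_scalar {𝕜 R : Type*} [CommSemiring 𝕜] [Ring R] [Algebra 𝕜 R] (l : 𝕜) (B : R) :
    bracket3 ((l • 1 : R)) B = 0 := by
  have h : bracket1 ((l • 1 : R)) B = 0 := by
    simp [bracket1, smul_mul_assoc, mul_smul_comm]
  rw [bracket3, h]
  simp [bracket1]

lemma eigen_const {𝕜 X : Type*} [Field 𝕜] [AddCommGroup X] [Module 𝕜 X] [Nontrivial X]
    (T : X →ₗ[𝕜] X) (h : ∀ x : X, ∃ c : 𝕜, T x = c • x) : ∃ c : 𝕜, ∀ x, T x = c • x := by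
  obtain ⟨x₀, hx₀⟩ := exists_ne (0 : X)
  obtain ⟨c₀, hc₀⟩ := h x₀
  refine ⟨c₀, fun y => ?_⟩
  rcases eq_or_ne y 0 with rfl | hy
  · simp
  obtain ⟨c, hc⟩ := h y
  by_cases hdep : ∃ a : 𝕜, y = a • x₀
  · obtain ⟨a, rfl⟩ := hdep
    have ha : a ≠ 0 := by rintro rfl; simp at hy
    have h1 : (a * c₀) • x₀ = (c * a) • x₀ := by
      rw [mul_smul, ← hc₀, ← map_smul, mul_smul, ← hc]
    have hcc : a * c₀ = c * a := by
      by_contra hne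
      exact hx₀ (by
        have h2 := sub_eq_zero.mpr h1
        rw [← sub_smul] at h2
        exact (smul_eq_zero.mp h2).resolve_left (sub_ne_zero.mpr hne))
    have hceq : c = c₀ := by
      rw [mul_comm c a] at hcc
      exact (mul_left_cancel₀ ha hcc).symm
    rw [hc, hceq]
  · obtain ⟨c', hc'⟩ := h (x₀ + y)
    rw [map_add, hc₀, hc] at hc'
    have key : (c₀ - c') • x₀ + (c - c') • y = 0 := by
      linear_combination (norm := module) hc'
    have hcc' : c = c' := by
      by_contra hne
      apply hdep
      refine ⟨-(c₀ - c') / (c - c'), ?_⟩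
      have h1 : (c - c') • y = -((c₀ - c') • x₀) := by
        rw [eq_neg_iff_add_eq_zero, add_comm]; exact key
      have h2 : y = (c - c')⁻¹ • -((c₀ - c') • x₀) := by
        rw [← h1, smul_smul, inv_mul_cancel₀ (sub_ne_zero.mpr hne), one_smul]
      rw [h2, smul_neg, ← neg_smul, smul_smul, div_eq_mul_inv, mul_comm]; ring_nf
    have hc₀' : c₀ = c' := by
      rw [hcc'] at key
      simp only [sub_self, zero_smul, add_zero] at key
      rcases smul_eq_zero.mp key with h1 | h1
      · exact sub_eq_zero.mp h1
      · exact absurd h1 hx₀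
    rw [hc, hcc', ← hc₀']

lemma scalar_char {𝕜 X : Type*} [RCLike 𝕜] [NormedAddCommGroup X] [NormedSpace 𝕜 X]
    [Nontrivial X]
    (𝒜 : Subalgebra 𝕜 (X →L[𝕜] X)) (h𝒜 : IsStandardOperatorAlgebra 𝕜 X 𝒜) (S : 𝒜) :
    (∀ B : 𝒜, bracket3 S B = 0) ↔ ∃ l : 𝕜, S = l • (1 : 𝒜) := by
  constructor
  · intro hb
    -- every nonzero x is an eigenvector of S
    have heig : ∀ x : X, ∃ c : 𝕜, (S : X →L[𝕜] X) x = c • x := by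
      intro x
      rcases eq_or_ne x 0 with rfl | hx
      · exact ⟨0, by simp⟩
      obtain ⟨g, _, hgx⟩ := exists_dual_vector 𝕜 x (norm_ne_zero_iff.mpr hx)
      set f : X →L[𝕜] 𝕜 := ((‖x‖ : 𝕜)⁻¹) • g with hf
      have hnorm : (‖x‖ : 𝕜) ≠ 0 := by
        simp [norm_eq_zero, hx]
      have hfx : f x = 1 := by
        rw [hf]
        simp only [ContinuousLinearMap.smul_apply, smul_eq_mul, hgx]
        exact inv_mul_cancel₀ hnorm
      set Pop : X →L[𝕜] X := f.smulRight x with hPop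
      have hfin : FiniteDimensional 𝕜 (LinearMap.range (Pop : X →ₗ[𝕜] X)) := by
        have hle : LinearMap.range (Pop : X →ₗ[𝕜] X) ≤ 𝕜 ∙ x := by
          rintro y ⟨z, rfl⟩
          exact Submodule.smul_mem _ _ (Submodule.mem_span_singleton_self x)
        exact Submodule.finiteDimensional_of_le hle
      set P : 𝒜 := ⟨Pop, h𝒜 Pop hfin⟩ with hP
      have hPP : P * P = P := by
        apply Subtype.ext
        show Pop * Pop = Pop
        ext y
        simp [hPop, smul_smul, hfx]
      have hcomm : (S : X →L[𝕜] X) * Pop = Pop * (S : X →L[𝕜] X) := by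
        have h0 := hb P
        rw [b3_idem S P hPP] at h0
        have h1 : S * P = P * S := by
          have := sub_eq_zero.mp h0
          exact this
        have := congrArg (Subtype.val) h1
        simpa using this
      have := congrFun (congrArg (DFunLike.coe) hcomm) x
      simp only [ContinuousLinearMap.mul_apply] at this
      refine ⟨f ((S : X →L[𝕜] X) x), ?_⟩
      have hPx : Pop x = x := by simp [hPop, hfx]
      have hPSx : Pop ((S : X →L[𝕜] X) x) = f ((S : X →L[𝕜] X) x) • x := by
        simp [hPop]
      rw [hPx] at this
      exact this.trans hPSx
    obtain ⟨c, hc⟩ := eigen_const ((S : X →L[𝕜] X) : X →ₗ[𝕜] X) (fun x => heig x)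
    refine ⟨c, ?_⟩
    apply Subtype.ext
    show (S : X →L[𝕜] X) = c • (1 : X →L[𝕜] X)
    ext y
    simpa using hc y
  · rintro ⟨l, rfl⟩ B
    exact b3_scalar l B

theorem stmt_9 {𝕜 X : Type*} [RCLike 𝕜] [NormedAddCommGroup X] [NormedSpace 𝕜 X]
    [CompleteSpace X] (hdim : 2 ≤ Module.rank 𝕜 X)
    (𝒜 : Subalgebra 𝕜 (X →L[𝕜] X)) (h𝒜 : IsStandardOperatorAlgebra 𝕜 X 𝒜)
    (Φ : 𝒜 → 𝒜) (hsurj : Function.Surjective Φ)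
    (hpres : ∀ A B : 𝒜, bracket3 (Φ A) (Φ B) = bracket3 A B) :
    Φ '' {A : 𝒜 | ∃ l : 𝕜, A = l • (1 : 𝒜)} = {A : 𝒜 | ∃ l : 𝕜, A = l • (1 : 𝒜)} := by
  have : Nontrivial X := by
    have h0 : 0 < Module.rank 𝕜 X := lt_of_lt_of_le (by norm_num) hdim
    exact rank_pos_iff_nontrivial.mp h0
  have hchar := scalar_char 𝒜 h𝒜
  have hiff : ∀ A : 𝒜, (∃ l : 𝕜, A = l • (1 : 𝒜)) ↔ (∃ l : 𝕜, Φ A = l • (1 : 𝒜)) := by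
    intro A
    constructor
    · intro hA
      apply (hchar (Φ A)).mp
      intro C
      obtain ⟨B, rfl⟩ := hsurj C
      rw [hpres A B]
      exact (hchar A).mpr hA B
    · intro hA
      apply (hchar A).mp
      intro B
      rw [← hpres A B]
      exact (hchar (Φ A)).mpr hA (Φ B)
  ext C
  constructor
  · rintro ⟨A, hA, rfl⟩
    exact (hiff A).mp hA
  · intro hC
    obtain ⟨A, rfl⟩ := hsurj C
    exact ⟨A, (hiff A).mpr hC, rfl⟩
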